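/- Let n ≥ 2, 1 ≤ k ≤ n, and set α = (k/(n·C(n−1,k−1)))^{1/k}. Then the function v₁(r) = α·r satisfies v₁'(r) − F_{k,n}(r, v₁(r)) ≤ 0 for all r > 0, i.e. v₁ is a sub-solution of v' = F_{k,n}(r,v). -/

import Mathlib

open Real

/-- The speed function `F_{k,n}(x,y)`. -/
noncomputable def Fkn (k n : ℕ) (x y : ℝ) : ℝ :=
  (y / x) * (1 + y ^ 2) *
    ((1 / ((n - 1).choose (k - 1) : ℝ)) * (x / y) ^ k - ((n : ℝ) - k) / k)

/-- `v₁(r) = α r` with `α = (k/(n·C(n−1,k−1)))^{1/k}` is a sub-solution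
of `v' = F_{k,n}(r,v)` on `(0,∞)`. -/
theorem stmt1 (n k : ℕ) (hn : 2 ≤ n) (hk : 1 ≤ k) (hkn : k ≤ n)
    (α : ℝ) (hα : α = ((k : ℝ) / (n * ((n - 1).choose (k - 1) : ℝ))) ^ ((1 : ℝ) / k))
    (v₁ : ℝ → ℝ) (hv₁ : ∀ r, v₁ r = α * r) :
    ∀ r : ℝ, 0 < r → deriv v₁ r - Fkn k n r (v₁ r) ≤ 0 := by
  set C : ℝ := ((n - 1).choose (k - 1) : ℝ) with hC
  have hCpos : (0 : ℝ) < C := by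
    rw [hC]; exact_mod_cast Nat.choose_pos (by omega : k - 1 ≤ n - 1)
  have hkpos : (0 : ℝ) < k := by exact_mod_cast hk
  have hnpos : (0 : ℝ) < n := by positivity
  have hbase : (0 : ℝ) < (k : ℝ) / (n * C) := by positivity
  have hαpos : 0 < α := by rw [hα]; exact rpow_pos_of_pos hbase _
  have hk0 : (k : ℝ) ≠ 0 := ne_of_gt hkpos
  have hαk : α ^ k = (k : ℝ) / (n * C) := by
    rw [hα, ← rpow_natCast (((k : ℝ) / (n * C)) ^ ((1:ℝ)/k)) k,
      ← rpow_mul hbase.le, one_div, inv_mul_cancel₀ hk0, rpow_one]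
  intro r hr
  have hd : deriv v₁ r = α := by
    have hfe : v₁ = fun r => α * r := funext hv₁
    have := ((hasDerivAt_id r).const_mul α).deriv
    rw [hfe]
    simpa using this
  rw [hd, hv₁, Fkn]
  have hrα : (0 : ℝ) < α * r := by positivity
  have h1 : (r / (α * r)) ^ k = (n * C) / (k : ℝ) := by
    have : r / (α * r) = 1 / α := by field_simp
    rw [this, div_pow, one_pow, hαk, one_div, inv_div]
  rw [h1]
  have h2 : 1 / C * (n * C / k) - ((n : ℝ) - k) / k = 1 := by
    field_simp
    ring
  rw [h2, mul_one]
  have hdiv : α * r / r = α := by field_simp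
  rw [hdiv]
  nlinarith [sq_nonneg (α * r), hαpos, mul_nonneg hαpos.le (sq_nonneg (α*r))]
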